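/- Let 𝒮 be a sparse collection of dyadic cubes in ℝ^n, let w be a weight, and let γ ∈ [0,1). Then there is a constant C, depending only on γ, such that for every dyadic cube R: ∑_{Q∈𝒮, Q⊆R} ⟨w⟩_Q^γ |Q| ≤ C ⟨w⟩_R^γ |R|. -/

import Mathlib

open MeasureTheory ENNReal NNReal Set

noncomputable section

namespace Paper

abbrev Rn (n : ℕ) := Fin n → ℝ

/-- A dyadic cube in `ℝⁿ`: `∏ᵢ [2^{-k} mᵢ, 2^{-k}(mᵢ+1))`. -/
def IsDyadicCube (n : ℕ) (Q : Set (Rn n)) : Prop :=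
  ∃ (k : ℤ) (m : Fin n → ℤ), Q =
    {x : Rn n | ∀ i, (2:ℝ) ^ (-k) * m i ≤ x i ∧ x i < (2:ℝ) ^ (-k) * (m i + 1)}

/-- A sparse collection of dyadic cubes. -/
def IsSparse (n : ℕ) (S : Set (Set (Rn n))) : Prop :=
  (∀ Q ∈ S, IsDyadicCube n Q) ∧
  ∃ E : Set (Rn n) → Set (Rn n),
    (∀ Q ∈ S, E Q ⊆ Q ∧ MeasurableSet (E Q) ∧ volume Q ≤ 2 * volume (E Q)) ∧
    S.Pairwise (fun Q Q' => Disjoint (E Q) (E Q'))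

/-- Average `⟨w⟩_Q = |Q|⁻¹ ∫_Q w`. -/
def dAvg {n : ℕ} (w : Rn n → ℝ≥0∞) (Q : Set (Rn n)) : ℝ≥0∞ :=
  (volume Q)⁻¹ * ∫⁻ x in Q, w x

/-- Weighted average `⟨f⟩_Q^σ = σ(Q)⁻¹ ∫_Q f σ`. -/
def dAvgW {n : ℕ} (σ f : Rn n → ℝ≥0∞) (Q : Set (Rn n)) : ℝ≥0∞ :=
  (∫⁻ x in Q, σ x)⁻¹ * ∫⁻ x in Q, f x * σ x

/-- Local integrability (w.r.t. dyadic cubes). -/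
def LocInt {n : ℕ} (w : Rn n → ℝ≥0∞) : Prop :=
  ∀ Q : Set (Rn n), IsDyadicCube n Q → (∫⁻ x in Q, w x) < ∞

/-- The sparse operator `A_𝒮^r g = (∑_{Q∈𝒮} ⟨g⟩_Q^r 1_Q)^{1/r}`. -/
def sparseOp {n : ℕ} (S : Set (Set (Rn n))) (r : ℝ) (g : Rn n → ℝ≥0∞) (x : Rn n) : ℝ≥0∞ :=
  (∑' Q : S, (Q : Set (Rn n)).indicator (fun _ => (dAvg g Q) ^ r) x) ^ (1 / r)

/-- `‖g‖_{L^p(w)} = (∫ g^p w)^{1/p}`. -/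
def lpNorm {n : ℕ} (p : ℝ) (w g : Rn n → ℝ≥0∞) : ℝ≥0∞ :=
  (∫⁻ x, (g x) ^ p * w x) ^ (1 / p)

/-- `‖g‖_{L^{p,∞}(w)} = sup_{t>0} t · w({g > t})^{1/p}`. -/
def wLpNorm {n : ℕ} (p : ℝ) (w g : Rn n → ℝ≥0∞) : ℝ≥0∞ :=
  ⨆ (t : ℝ≥0) (_ : 0 < t), (t : ℝ≥0∞) * (∫⁻ x in {x | (t : ℝ≥0∞) < g x}, w x) ^ (1 / p)

/-- `‖A_𝒮^r(·σ)‖_{L^p(σ)→L^p(w)}`, the least constant in the strong-type bound. -/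
def opNormStrong {n : ℕ} (S : Set (Set (Rn n))) (r p : ℝ) (w σ : Rn n → ℝ≥0∞) : ℝ≥0∞ :=
  sInf {C : ℝ≥0∞ | ∀ f : Rn n → ℝ≥0∞, Measurable f →
    lpNorm p w (sparseOp S r (fun x => f x * σ x)) ≤ C * lpNorm p σ f}

/-- `‖A_𝒮^r(·σ)‖_{L^p(σ)→L^{p,∞}(w)}`, the least constant in the weak-type bound. -/
def opNormWeak {n : ℕ} (S : Set (Set (Rn n))) (r p : ℝ) (w σ : Rn n → ℝ≥0∞) : ℝ≥0∞ :=
  sInf {C : ℝ≥0∞ | ∀ f : Rn n → ℝ≥0∞, Measurable f →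
    wLpNorm p w (sparseOp S r (fun x => f x * σ x)) ≤ C * lpNorm p σ f}

/-- Two-weight (dyadic) `A_p` characteristic. -/
def ApChar {n : ℕ} (p : ℝ) (w σ : Rn n → ℝ≥0∞) : ℝ≥0∞ :=
  ⨆ (Q : Set (Rn n)) (_ : IsDyadicCube n Q), dAvg w Q * (dAvg σ Q) ^ (p - 1)

/-- Dyadic maximal operator. -/
def dyadicM {n : ℕ} (g : Rn n → ℝ≥0∞) (x : Rn n) : ℝ≥0∞ :=
  ⨆ (Q : Set (Rn n)) (_ : IsDyadicCube n Q ∧ x ∈ Q), dAvg g Q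

/-- Fujii–Wilson (dyadic) `A_∞` characteristic. -/
def AinfChar {n : ℕ} (w : Rn n → ℝ≥0∞) : ℝ≥0∞ :=
  ⨆ (Q : Set (Rn n)) (_ : IsDyadicCube n Q),
    (∫⁻ x in Q, w x)⁻¹ * ∫⁻ x in Q, dyadicM (Q.indicator w) x

/-- The testing constant `𝒯_s` (Theorem 1.4 uses `s = r`). -/
def testT {n : ℕ} (S : Set (Set (Rn n))) (p s : ℝ) (w σ : Rn n → ℝ≥0∞) : ℝ≥0∞ :=
  ⨆ (R : Set (Rn n)) (_ : R ∈ S),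
    (∫⁻ x in R, σ x) ^ (-(s / p)) *
      lpNorm (p / s) w (fun x => ∑' Q : {Q : Set (Rn n) // Q ∈ S ∧ Q ⊆ R},
        (Q : Set (Rn n)).indicator (fun _ => (dAvg σ Q) ^ s) x)

/-- The dual testing constant `𝒯*`. -/
def testTstar {n : ℕ} (S : Set (Set (Rn n))) (p r : ℝ) (w σ : Rn n → ℝ≥0∞) : ℝ≥0∞ :=
  ⨆ (R : Set (Rn n)) (_ : R ∈ S),
    (∫⁻ x in R, w x) ^ (-(1 - r / p)) *
      lpNorm ((p / r) / (p / r - 1)) σ (fun x => ∑' Q : {Q : Set (Rn n) // Q ∈ S ∧ Q ⊆ R},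
        (Q : Set (Rn n)).indicator (fun _ => (dAvg σ Q) ^ (r - 1) * dAvg w Q) x)


def dcube (n : ℕ) (k : ℤ) (m : Fin n → ℤ) : Set (Rn n) :=
  {x : Rn n | ∀ i, (2:ℝ) ^ (-k) * m i ≤ x i ∧ x i < (2:ℝ) ^ (-k) * (m i + 1)}

lemma isDyadicCube_iff {n : ℕ} {Q : Set (Rn n)} :
    IsDyadicCube n Q ↔ ∃ k m, Q = dcube n k m := Iff.rfl

lemma dcube_eq_pi (n : ℕ) (k : ℤ) (m : Fin n → ℤ) :
    dcube n k m = Set.pi univ (fun i => Ico ((2:ℝ)^(-k) * m i) ((2:ℝ)^(-k) * (m i + 1))) := by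
  ext x; simp [dcube, Set.mem_pi, Set.mem_Ico]

lemma measurableSet_dcube (n : ℕ) (k : ℤ) (m : Fin n → ℤ) : MeasurableSet (dcube n k m) := by
  rw [dcube_eq_pi]
  exact MeasurableSet.univ_pi (fun i => measurableSet_Ico)

lemma volume_dcube (n : ℕ) (k : ℤ) (m : Fin n → ℤ) :
    volume (dcube n k m) = ENNReal.ofReal (((2:ℝ)^(-k)) ^ n) := by
  rw [dcube_eq_pi, volume_pi_pi]
  have : ∀ i : Fin n, volume (Ico ((2:ℝ)^(-k) * m i) ((2:ℝ)^(-k) * (m i + 1)))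
      = ENNReal.ofReal ((2:ℝ)^(-k)) := by
    intro i; rw [Real.volume_Ico]; ring_nf
  rw [Finset.prod_congr rfl (fun i _ => this i), Finset.prod_const,
    ENNReal.ofReal_pow (by positivity), Finset.card_univ, Fintype.card_fin]

lemma dcube_nonempty (n : ℕ) (k : ℤ) (m : Fin n → ℤ) :
    (fun i => (2:ℝ)^(-k) * m i) ∈ dcube n k m := by
  intro i
  refine ⟨le_rfl, ?_⟩
  have h : (0:ℝ) < 2^(-k) := by positivity
  exact mul_lt_mul_of_pos_left (by linarith : ((m i):ℝ) < m i + 1) h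

lemma Ico1D {k k' m m' : ℤ} (hk : k' ≤ k) {x : ℝ}
    (hx : (2:ℝ)^(-k) * m ≤ x ∧ x < (2:ℝ)^(-k) * (m+1))
    (hx' : (2:ℝ)^(-k') * m' ≤ x ∧ x < (2:ℝ)^(-k') * (m'+1)) :
    ∀ y : ℝ, (2:ℝ)^(-k) * m ≤ y ∧ y < (2:ℝ)^(-k) * (m+1) →
      (2:ℝ)^(-k') * m' ≤ y ∧ y < (2:ℝ)^(-k') * (m'+1) := by
  set L : ℤ := 2 ^ (k - k').toNat with hLdef
  have hL : ((L:ℝ)) = (2:ℝ) ^ (k - k') := by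
    rw [hLdef]; push_cast
    rw [← zpow_natCast (2:ℝ), Int.toNat_of_nonneg (sub_nonneg.2 hk)]
  have h2 : (2:ℝ)^(-k') = (2:ℝ)^(-k) * (L:ℝ) := by
    rw [hL, ← zpow_add₀ (by norm_num : (2:ℝ) ≠ 0)]; ring_nf
  have hpos : (0:ℝ) < (2:ℝ)^(-k) := by positivity
  -- m' * L ≤ m
  have h1 : m' * L ≤ m := by
    have : (2:ℝ)^(-k) * ((m' * L : ℤ) : ℝ) < (2:ℝ)^(-k) * ((m:ℝ) + 1) := by
      push_cast
      calc (2:ℝ)^(-k) * ((m':ℝ) * L) = (2:ℝ)^(-k') * m' := by rw [h2]; ring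
        _ ≤ x := hx'.1
        _ < (2:ℝ)^(-k) * (m + 1) := hx.2
    have := (mul_lt_mul_iff_right₀ hpos).1 this
    have : (m' * L : ℤ) < m + 1 := by exact_mod_cast this
    omega
  -- m + 1 ≤ (m'+1) * L
  have h3 : m + 1 ≤ (m' + 1) * L := by
    have : (2:ℝ)^(-k) * (m:ℝ) < (2:ℝ)^(-k) * (((m'+1) * L : ℤ) : ℝ) := by
      push_cast
      calc (2:ℝ)^(-k) * (m:ℝ) ≤ x := hx.1
        _ < (2:ℝ)^(-k') * (m'+1) := hx'.2
        _ = (2:ℝ)^(-k) * (((m':ℝ)+1) * L) := by rw [h2]; ring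
    have := (mul_lt_mul_iff_right₀ hpos).1 this
    have : (m:ℤ) < (m'+1) * L := by exact_mod_cast this
    omega
  intro y hy
  constructor
  · calc (2:ℝ)^(-k') * m' = (2:ℝ)^(-k) * ((m' * L : ℤ):ℝ) := by push_cast; rw [h2]; ring
      _ ≤ (2:ℝ)^(-k) * (m:ℝ) := by
          apply mul_le_mul_of_nonneg_left _ hpos.le
          exact_mod_cast h1
      _ ≤ y := hy.1
  · calc y < (2:ℝ)^(-k) * ((m:ℝ)+1) := hy.2
      _ ≤ (2:ℝ)^(-k) * (((m'+1) * L : ℤ):ℝ) := by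
          apply mul_le_mul_of_nonneg_left _ hpos.le
          exact_mod_cast h3
      _ = (2:ℝ)^(-k') * ((m':ℝ)+1) := by push_cast; rw [h2]; ring

lemma dcube_subset {n : ℕ} {k k' : ℤ} {m m' : Fin n → ℤ} (hk : k' ≤ k) {x : Rn n}
    (hx : x ∈ dcube n k m) (hx' : x ∈ dcube n k' m') : dcube n k m ⊆ dcube n k' m' := by
  intro y hy i
  exact Ico1D hk (hx i) (hx' i) (y i) (hy i)

lemma dyadic_nested {n : ℕ} {Q Q' : Set (Rn n)} (hQ : IsDyadicCube n Q) (hQ' : IsDyadicCube n Q')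
    (h : ¬ Disjoint Q Q') : Q ⊆ Q' ∨ Q' ⊆ Q := by
  obtain ⟨k, m, rfl⟩ := hQ
  obtain ⟨k', m', rfl⟩ := hQ'
  rw [Set.not_disjoint_iff] at h
  obtain ⟨x, hx, hx'⟩ := h
  rcases le_total k' k with hk | hk
  · exact Or.inl (dcube_subset hk hx hx')
  · exact Or.inr (dcube_subset hk hx' hx)


lemma measurableSet_dyadic {n : ℕ} {Q : Set (Rn n)} (hQ : IsDyadicCube n Q) :
    MeasurableSet Q := by
  obtain ⟨k, m, rfl⟩ := hQ
  exact measurableSet_dcube n k m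

lemma dcube_zero (k : ℤ) (m : Fin 0 → ℤ) : dcube 0 k m = univ := by
  ext x; simp [dcube]

lemma volume_dyadic_pos {n : ℕ} {Q : Set (Rn n)} (hQ : IsDyadicCube n Q) :
    0 < volume Q := by
  obtain ⟨k, m, rfl⟩ := hQ
  rw [show ({x : Rn n | ∀ i, (2:ℝ) ^ (-k) * m i ≤ x i ∧ x i < (2:ℝ) ^ (-k) * (m i + 1)}) = dcube n k m from rfl,
    volume_dcube]
  positivity

lemma volume_dyadic_ne_top {n : ℕ} {Q : Set (Rn n)} (hQ : IsDyadicCube n Q) :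
    volume Q ≠ ⊤ := by
  obtain ⟨k, m, rfl⟩ := hQ
  rw [show ({x : Rn n | ∀ i, (2:ℝ) ^ (-k) * m i ≤ x i ∧ x i < (2:ℝ) ^ (-k) * (m i + 1)}) = dcube n k m from rfl,
    volume_dcube]
  exact ENNReal.ofReal_ne_top

-- if Q ⊆ Q' and vol Q' ≤ vol Q then Q = Q'
lemma dyadic_eq_of_subset {n : ℕ} {Q Q' : Set (Rn n)} (hQ : IsDyadicCube n Q)
    (hQ' : IsDyadicCube n Q') (hsub : Q ⊆ Q') (hvol : volume Q' ≤ volume Q) : Q = Q' := by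
  obtain ⟨k, m, rfl⟩ := hQ
  obtain ⟨k', m', rfl⟩ := hQ'
  change dcube n k m ⊆ dcube n k' m' at hsub
  rcases Nat.eq_zero_or_pos n with hn | hn
  · subst hn; exact (dcube_zero k m).trans (dcube_zero k' m').symm
  · -- get 2^(-k') ≤ 2^(-k)
    rw [show ({x : Rn n | ∀ i, (2:ℝ) ^ (-k') * m' i ≤ x i ∧ x i < (2:ℝ) ^ (-k') * (m' i + 1)}) = dcube n k' m' from rfl,
      show ({x : Rn n | ∀ i, (2:ℝ) ^ (-k) * m i ≤ x i ∧ x i < (2:ℝ) ^ (-k) * (m i + 1)}) = dcube n k m from rfl,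
      volume_dcube, volume_dcube] at hvol
    rw [ENNReal.ofReal_le_ofReal_iff (by positivity)] at hvol
    have hbase : (2:ℝ)^(-k') ≤ (2:ℝ)^(-k) :=
      (pow_le_pow_iff_left₀ (by positivity) (by positivity) hn.ne').1 hvol
    have hkk : k ≤ k' := by
      have := (zpow_le_zpow_iff_right₀ (by norm_num : (1:ℝ) < 2)).1 hbase
      omega
    have hx : (fun i => (2:ℝ)^(-k) * m i) ∈ dcube n k m := dcube_nonempty n k m
    have hx' := hsub hx
    exact (subset_antisymm hsub (dcube_subset hkk hx' hx))

lemma dyadic_two_vol {n : ℕ} {Q Q' : Set (Rn n)} (hQ : IsDyadicCube n Q)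
    (hQ' : IsDyadicCube n Q') (hsub : Q ⊆ Q') (hne : Q ≠ Q') :
    2 * volume Q ≤ volume Q' := by
  rcases Nat.eq_zero_or_pos n with hn | hn
  · exfalso
    subst hn
    obtain ⟨k, m, rfl⟩ := hQ
    obtain ⟨k', m', rfl⟩ := hQ'
    exact hne ((dcube_zero k m).trans (dcube_zero k' m').symm)
  have hlt : volume Q < volume Q' := by
    rcases lt_or_ge (volume Q) (volume Q') with h | h
    · exact h
    · exact absurd (dyadic_eq_of_subset hQ hQ' hsub h) hne
  obtain ⟨k, m, rfl⟩ := hQ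
  obtain ⟨k', m', rfl⟩ := hQ'
  rw [show ({x : Rn n | ∀ i, (2:ℝ) ^ (-k') * m' i ≤ x i ∧ x i < (2:ℝ) ^ (-k') * (m' i + 1)}) = dcube n k' m' from rfl,
      show ({x : Rn n | ∀ i, (2:ℝ) ^ (-k) * m i ≤ x i ∧ x i < (2:ℝ) ^ (-k) * (m i + 1)}) = dcube n k m from rfl,
      volume_dcube, volume_dcube] at *
  rw [ENNReal.ofReal_lt_ofReal_iff (by positivity)] at hlt
  have hbase : (2:ℝ)^(-k) < (2:ℝ)^(-k') := by
    rcases lt_or_ge ((2:ℝ)^(-k)) ((2:ℝ)^(-k')) with h | h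
    · exact h
    · exfalso
      have := pow_le_pow_left₀ (by positivity : (0:ℝ) ≤ (2:ℝ)^(-k')) h n
      exact absurd hlt (not_lt.2 this)
  have hkk : -k < -k' := by
    rcases lt_or_ge (-k) (-k') with h | h
    · exact h
    · exfalso
      have := zpow_le_zpow_right₀ (by norm_num : (1:ℝ) ≤ 2) h
      exact absurd hbase (not_lt.2 this)
  have h2 : 2 * (2:ℝ)^(-k) ≤ (2:ℝ)^(-k') := by
    have : (2:ℝ)^(-k+1) ≤ (2:ℝ)^(-k') := zpow_le_zpow_right₀ (by norm_num) (by omega)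
    calc 2 * (2:ℝ)^(-k) = (2:ℝ)^(-k+1) := by
          rw [zpow_add₀ (by norm_num : (2:ℝ) ≠ 0)]; ring
      _ ≤ _ := this
  calc 2 * ENNReal.ofReal (((2:ℝ)^(-k))^n)
      = ENNReal.ofReal (2 * ((2:ℝ)^(-k))^n) := by
        rw [ENNReal.ofReal_mul (by norm_num)]; norm_num
    _ ≤ ENNReal.ofReal (((2:ℝ)^(-k'))^n) := by
        apply ENNReal.ofReal_le_ofReal
        calc 2 * ((2:ℝ)^(-k))^n ≤ 2^n * ((2:ℝ)^(-k))^n := by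
              apply mul_le_mul_of_nonneg_right _ (by positivity)
              exact le_self_pow₀ (by norm_num) hn.ne'
          _ = (2 * (2:ℝ)^(-k))^n := by rw [mul_pow]
          _ ≤ ((2:ℝ)^(-k'))^n := pow_le_pow_left₀ (by positivity) h2 n

lemma dyadic_countable (n : ℕ) : Set.Countable {Q : Set (Rn n) | IsDyadicCube n Q} := by
  have : {Q : Set (Rn n) | IsDyadicCube n Q} ⊆
      Set.range (fun p : ℤ × (Fin n → ℤ) => dcube n p.1 p.2) := by
    rintro Q ⟨k, m, rfl⟩
    exact ⟨(k, m), rfl⟩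
  exact (Set.countable_range _).mono this


/-- Every member of a family of dyadic cubes inside `R` is contained in a maximal member. -/
lemma exists_maximal {n : ℕ} {F : Set (Set (Rn n))} (hF : ∀ Q ∈ F, IsDyadicCube n Q)
    {R : Set (Rn n)} (hR : IsDyadicCube n R) (hFR : ∀ Q ∈ F, Q ⊆ R) :
    ∀ Q ∈ F, ∃ Q' ∈ F, Q ⊆ Q' ∧ ∀ Q'' ∈ F, Q' ⊆ Q'' → Q'' = Q' := by
  have key : ∀ d : ℕ, ∀ Q ∈ F, volume R ≤ 2^d * volume Q →
      ∃ Q' ∈ F, Q ⊆ Q' ∧ ∀ Q'' ∈ F, Q' ⊆ Q'' → Q'' = Q' := by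
    intro d
    induction d with
    | zero =>
      intro Q hQ hvol
      refine ⟨Q, hQ, subset_rfl, ?_⟩
      intro Q'' hQ'' hsub
      simp only [pow_zero, one_mul] at hvol
      exact (dyadic_eq_of_subset (hF Q hQ) (hF Q'' hQ'') hsub
        ((measure_mono (hFR Q'' hQ'')).trans hvol)).symm
    | succ d ih =>
      intro Q hQ hvol
      by_cases hmax : ∀ Q'' ∈ F, Q ⊆ Q'' → Q'' = Q
      · exact ⟨Q, hQ, subset_rfl, hmax⟩
      · push_neg at hmax
        obtain ⟨Q'', hQ'', hsub, hne⟩ := hmax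
        have h2 : 2 * volume Q ≤ volume Q'' :=
          dyadic_two_vol (hF Q hQ) (hF Q'' hQ'') hsub (fun h => hne h.symm)
        have : volume R ≤ 2^d * volume Q'' := by
          calc volume R ≤ 2^(d+1) * volume Q := hvol
            _ = 2^d * (2 * volume Q) := by ring
            _ ≤ 2^d * volume Q'' := mul_le_mul_right h2 _
        obtain ⟨Q', hQ', hsub', hmax'⟩ := ih Q'' hQ'' this
        exact ⟨Q', hQ', hsub.trans hsub', hmax'⟩
  intro Q hQ
  have hQpos := volume_dyadic_pos (hF Q hQ)
  have hRtop := volume_dyadic_ne_top hR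
  obtain ⟨d, hd⟩ := ENNReal.exists_nat_gt (show volume R / volume Q ≠ ⊤ from
    (ENNReal.div_lt_top hRtop hQpos.ne').ne)
  have hd2 : volume R / volume Q ≤ 2^d := by
    refine hd.le.trans ?_
    exact_mod_cast Nat.cast_le.2 (Nat.lt_two_pow_self (n := d)).le
  have : volume R ≤ 2^d * volume Q := by
    rcases eq_or_ne (volume Q) ⊤ with h | h
    · rw [h]; simp [ENNReal.mul_top (by positivity : (2:ℝ≥0∞)^d ≠ 0)]
    · exact (ENNReal.div_le_iff hQpos.ne' h).1 hd2
  exact key d Q hQ this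

/-- Measure bound for union of the family `{Q dyadic : Q ⊆ R, t ≤ ⟨w⟩_Q}`. -/
lemma union_bound {n : ℕ} (w : Rn n → ℝ≥0∞) {R : Set (Rn n)} (hR : IsDyadicCube n R)
    {t : ℝ≥0∞} (ht0 : t ≠ 0) (htop : t ≠ ⊤) :
    volume (⋃₀ {Q | IsDyadicCube n Q ∧ Q ⊆ R ∧ t ≤ dAvg w Q})
      ≤ t⁻¹ * ∫⁻ x in R, w x := by
  set F := {Q | IsDyadicCube n Q ∧ Q ⊆ R ∧ t ≤ dAvg w Q} with hF
  set M := {Q ∈ F | ∀ Q'' ∈ F, Q ⊆ Q'' → Q'' = Q} with hM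
  set μ := volume.withDensity w with hμ
  have hFd : ∀ Q ∈ F, IsDyadicCube n Q := fun Q hQ => hQ.1
  have hFR : ∀ Q ∈ F, Q ⊆ R := fun Q hQ => hQ.2.1
  have hsub : ⋃₀ F ⊆ ⋃₀ M := by
    rintro x ⟨Q, hQ, hx⟩
    obtain ⟨Q', hQ', hss, hmax⟩ := exists_maximal hFd hR hFR Q hQ
    exact ⟨Q', ⟨hQ', hmax⟩, hss hx⟩
  have hMc : M.Countable := (dyadic_countable n).mono (fun Q hQ => hQ.1.1)
  have hMdisj : M.Pairwise Disjoint := by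
    intro Q₁ h₁ Q₂ h₂ hne
    by_contra hd
    rcases dyadic_nested (hFd _ h₁.1) (hFd _ h₂.1) hd with h | h
    · exact hne ((h₁.2 Q₂ h₂.1 h).symm)
    · exact hne ((h₂.2 Q₁ h₁.1 h))
  have hMm : ∀ Q ∈ M, MeasurableSet Q := fun Q hQ => measurableSet_dyadic (hFd _ hQ.1)
  calc volume (⋃₀ F) ≤ volume (⋃₀ M) := measure_mono hsub
    _ = ∑' Q : M, volume (Q : Set (Rn n)) := measure_sUnion hMc hMdisj hMm
    _ ≤ ∑' Q : M, t⁻¹ * μ (Q : Set (Rn n)) := by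
        apply ENNReal.tsum_le_tsum
        intro Q
        have hQF := Q.2.1
        have havg : t ≤ (volume (Q:Set (Rn n)))⁻¹ * ∫⁻ x in (Q:Set (Rn n)), w x := hQF.2.2
        have hμQ : μ (Q:Set (Rn n)) = ∫⁻ x in (Q:Set (Rn n)), w x :=
          withDensity_apply w (hMm _ Q.2)
        rw [hμQ]
        have h1 : t * volume (Q:Set (Rn n)) ≤ ∫⁻ x in (Q:Set (Rn n)), w x := by
          calc t * volume (Q:Set (Rn n))
              ≤ ((volume (Q:Set (Rn n)))⁻¹ * ∫⁻ x in (Q:Set (Rn n)), w x) * volume (Q:Set (Rn n)) :=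
                mul_le_mul_left havg _
            _ = ∫⁻ x in (Q:Set (Rn n)), w x := by
                rw [mul_comm _ (volume (Q:Set (Rn n))), ← mul_assoc,
                  ENNReal.mul_inv_cancel (volume_dyadic_pos (hFd _ hQF)).ne'
                    (volume_dyadic_ne_top (hFd _ hQF)), one_mul]
        calc volume (Q:Set (Rn n)) = t⁻¹ * (t * volume (Q:Set (Rn n))) := by
              rw [← mul_assoc, ENNReal.inv_mul_cancel ht0 htop, one_mul]
          _ ≤ t⁻¹ * ∫⁻ x in (Q:Set (Rn n)), w x := mul_le_mul_right h1 _
    _ = t⁻¹ * ∑' Q : M, μ (Q : Set (Rn n)) := ENNReal.tsum_mul_left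
    _ = t⁻¹ * μ (⋃₀ M) := by rw [measure_sUnion hMc hMdisj hMm]
    _ ≤ t⁻¹ * μ R := by
        apply mul_le_mul_right
        apply measure_mono
        exact sUnion_subset (fun Q hQ => hFR Q hQ.1)
    _ = t⁻¹ * ∫⁻ x in R, w x := by rw [withDensity_apply w (measurableSet_dyadic hR)]


lemma sparse_tsum {n : ℕ} {S : Set (Set (Rn n))} (E : Set (Rn n) → Set (Rn n))
    (hE : ∀ Q ∈ S, E Q ⊆ Q ∧ MeasurableSet (E Q) ∧ volume Q ≤ 2 * volume (E Q))
    (hEdisj : S.Pairwise (fun Q Q' => Disjoint (E Q) (E Q')))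
    {ι : Type} [Countable ι] (f : ι → Set (Rn n)) (hf : ∀ i, f i ∈ S)
    (hinj : Function.Injective f) {B : Set (Rn n)} (hfB : ∀ i, E (f i) ⊆ B) :
    ∑' i, volume (f i) ≤ 2 * volume B := by
  have hd : Pairwise (Function.onFun Disjoint (fun i => E (f i))) := by
    intro i j hij
    exact hEdisj (hf i) (hf j) (fun h => hij (hinj h))
  calc ∑' i, volume (f i) ≤ ∑' i, 2 * volume (E (f i)) :=
        ENNReal.tsum_le_tsum (fun i => (hE _ (hf i)).2.2)
    _ = 2 * ∑' i, volume (E (f i)) := ENNReal.tsum_mul_left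
    _ = 2 * volume (⋃ i, E (f i)) := by rw [measure_iUnion hd (fun i => (hE _ (hf i)).2.1)]
    _ ≤ 2 * volume B := mul_le_mul_right (measure_mono (iUnion_subset hfB)) _

/-- Proposition 3.2 (Carleson embedding type estimate):
for sparse `𝒮` and `γ ∈ [0,1)`, `∑_{Q∈𝒮, Q⊆R} ⟨w⟩_Q^γ |Q| ≲ ⟨w⟩_R^γ |R|`. -/
theorem statement12 (γ : ℝ) (hγ0 : 0 ≤ γ) (hγ1 : γ < 1) :
    ∃ C : ℝ≥0∞, C ≠ ∞ ∧
      ∀ (n : ℕ) (S : Set (Set (Rn n))), IsSparse n S →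
      ∀ w : Rn n → ℝ≥0∞, Measurable w → LocInt w →
      ∀ R : Set (Rn n), IsDyadicCube n R →
        (∑' Q : {Q : Set (Rn n) // Q ∈ S ∧ Q ⊆ R}, (dAvg w Q) ^ γ * volume (Q : Set (Rn n)))
          ≤ C * (dAvg w R) ^ γ * volume R := by
  classical
  set c : ℝ≥0∞ := (2:ℝ≥0∞) ^ (γ - 1) with hc
  have hclt : c < 1 := by
    have h := ENNReal.rpow_lt_rpow_of_exponent_lt (x := 2) (by norm_num) ENNReal.ofNat_ne_top
      (show γ - 1 < 0 by linarith)
    simpa [ENNReal.rpow_zero] using h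
  set C : ℝ≥0∞ := (2:ℝ≥0∞) ^ ((1:ℝ) + γ) * (1 - c)⁻¹ with hC
  have h2top : (2:ℝ≥0∞) ^ ((1:ℝ)+γ) ≠ ⊤ :=
    ENNReal.rpow_ne_top_of_nonneg (by linarith) ENNReal.ofNat_ne_top
  have hCtop : C ≠ ⊤ := by
    apply ENNReal.mul_ne_top h2top
    rw [ENNReal.inv_ne_top]
    exact (tsub_pos_iff_lt.2 hclt).ne'
  have hC2 : 2 ≤ C := by
    have h1 : (2:ℝ≥0∞) ≤ 2 ^ ((1:ℝ)+γ) := by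
      calc (2:ℝ≥0∞) = 2 ^ (1:ℝ) := (ENNReal.rpow_one 2).symm
        _ ≤ 2 ^ ((1:ℝ)+γ) := ENNReal.rpow_le_rpow_of_exponent_le (by norm_num) (by linarith)
    have h2 : (1:ℝ≥0∞) ≤ (1 - c)⁻¹ :=
      le_trans (le_of_eq inv_one.symm) (ENNReal.inv_le_inv.2 tsub_le_self)
    calc (2:ℝ≥0∞) = 2 * 1 := (mul_one 2).symm
      _ ≤ C := mul_le_mul' h1 h2
  refine ⟨C, hCtop, ?_⟩
  intro n S hS w hw hloc R hR
  obtain ⟨hSd, E, hE, hEdisj⟩ := hS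
  have hRv0 : volume R ≠ 0 := (volume_dyadic_pos hR).ne'
  have hRvt : volume R ≠ ⊤ := volume_dyadic_ne_top hR
  have hTcnt : Set.Countable {Q : Set (Rn n) | Q ∈ S ∧ Q ⊆ R} :=
    (dyadic_countable n).mono (fun Q hQ => hSd Q hQ.1)
  haveI : Countable {Q : Set (Rn n) // Q ∈ S ∧ Q ⊆ R} := hTcnt.to_subtype
  set lam := dAvg w R with hlam
  have hsub_int : ∀ Q : {Q : Set (Rn n) // Q ∈ S ∧ Q ⊆ R}, (∫⁻ x in (Q:Set (Rn n)), w x) ≤ ∫⁻ x in R, w x :=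
    fun Q => lintegral_mono_set Q.2.2
  by_cases hI : (∫⁻ x in R, w x) = 0
  · -- degenerate case
    have hQz : ∀ Q : {Q : Set (Rn n) // Q ∈ S ∧ Q ⊆ R}, dAvg w (Q:Set (Rn n)) = lam := by
      intro Q
      have h1 : (∫⁻ x in (Q:Set (Rn n)), w x) = 0 := le_antisymm ((hsub_int Q).trans hI.le) zero_le
      rw [hlam, dAvg, dAvg, h1, hI, mul_zero, mul_zero]
    calc (∑' Q : {Q : Set (Rn n) // Q ∈ S ∧ Q ⊆ R}, (dAvg w (Q:Set (Rn n))) ^ γ * volume (Q : Set (Rn n)))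
        = ∑' Q : {Q : Set (Rn n) // Q ∈ S ∧ Q ⊆ R}, lam ^ γ * volume (Q : Set (Rn n)) := by
          congr 1; funext Q; rw [hQz Q]
      _ = lam ^ γ * ∑' Q : {Q : Set (Rn n) // Q ∈ S ∧ Q ⊆ R}, volume (Q : Set (Rn n)) := ENNReal.tsum_mul_left
      _ ≤ lam ^ γ * (2 * volume R) := by
          apply mul_le_mul_right
          exact sparse_tsum E hE hEdisj (fun Q : {Q : Set (Rn n) // Q ∈ S ∧ Q ⊆ R} => (Q:Set (Rn n)))
            (fun Q => Q.2.1) (fun a b hab => Subtype.ext hab)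
            (fun Q => ((hE _ Q.2.1).1).trans Q.2.2)
      _ ≤ C * lam ^ γ * volume R := by
          calc lam ^ γ * (2 * volume R) = 2 * (lam^γ * volume R) := by ring
            _ ≤ C * (lam^γ * volume R) := mul_le_mul_left hC2 _
            _ = C * lam ^ γ * volume R := by ring
  · -- main case
    have hlamt : lam ≠ ⊤ := by
      rw [hlam, dAvg]
      exact ENNReal.mul_ne_top (ENNReal.inv_ne_top.2 hRv0) (hloc R hR).ne
    have hlam0 : lam ≠ 0 := by
      rw [hlam, dAvg]
      exact mul_ne_zero (ENNReal.inv_ne_zero.2 hRvt) hI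
    have hIR : lam * volume R = ∫⁻ x in R, w x := by
      rw [hlam, dAvg, mul_comm (volume R)⁻¹ _, mul_assoc,
        ENNReal.inv_mul_cancel hRv0 hRvt, mul_one]
    have hVlt : ∀ Q : {Q : Set (Rn n) // Q ∈ S ∧ Q ⊆ R}, dAvg w (Q:Set (Rn n)) ≠ ⊤ := by
      intro Q
      rw [dAvg]
      exact ENNReal.mul_ne_top (ENNReal.inv_ne_top.2 (volume_dyadic_pos (hSd _ Q.2.1)).ne')
        (hloc _ (hSd _ Q.2.1)).ne
    -- classification
    set cl : {Q : Set (Rn n) // Q ∈ S ∧ Q ⊆ R} → ℕ := fun Q => sSup {j : ℕ | 2^j * lam ≤ dAvg w (Q:Set (Rn n))} with hcl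
    have hbdd : ∀ Q : {Q : Set (Rn n) // Q ∈ S ∧ Q ⊆ R}, BddAbove {j : ℕ | 2^j * lam ≤ dAvg w (Q:Set (Rn n))} := by
      intro Q
      obtain ⟨N, hN⟩ := ENNReal.exists_nat_gt (show dAvg w (Q:Set (Rn n)) / lam ≠ ⊤ from
        (ENNReal.div_lt_top (hVlt Q) hlam0).ne)
      have hN2 : dAvg w (Q:Set (Rn n)) < 2^N * lam := by
        rw [← ENNReal.div_lt_iff (Or.inl hlam0) (Or.inl hlamt)]
        calc dAvg w (Q:Set (Rn n)) / lam < N := hN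
          _ ≤ 2^N := by exact_mod_cast Nat.cast_le.2 (Nat.lt_two_pow_self (n := N)).le
      refine ⟨N, fun j hj => ?_⟩
      have hlt : (2:ℝ≥0∞)^j * lam < 2^N * lam := lt_of_le_of_lt hj hN2
      have h2 : (2:ℝ≥0∞)^j < 2^N := by
          by_contra hh; push_neg at hh; exact absurd hlt (not_lt.2 (mul_le_mul_left hh lam))
      by_contra hjN
      push_neg at hjN
      exact absurd h2 (not_lt.2 (pow_le_pow_right' (by norm_num : (1:ℝ≥0∞) ≤ 2) hjN.le))
    have hF1 : ∀ Q : {Q : Set (Rn n) // Q ∈ S ∧ Q ⊆ R}, dAvg w (Q:Set (Rn n)) < 2^(cl Q + 1) * lam := by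
      intro Q
      by_contra h
      push_neg at h
      have hmem : cl Q + 1 ∈ {j : ℕ | 2^j * lam ≤ dAvg w (Q:Set (Rn n))} := h
      have h2 := le_csSup (hbdd Q) hmem
      have h3 : sSup {j : ℕ | 2^j * lam ≤ dAvg w (Q:Set (Rn n))} = cl Q := rfl
      rw [h3] at h2
      omega
    have hF2 : ∀ Q : {Q : Set (Rn n) // Q ∈ S ∧ Q ⊆ R}, 1 ≤ cl Q → 2^(cl Q) * lam ≤ dAvg w (Q:Set (Rn n)) := by
      intro Q h1
      have hne : {j : ℕ | 2^j * lam ≤ dAvg w (Q:Set (Rn n))}.Nonempty := by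
        by_contra h
        rw [Set.not_nonempty_iff_eq_empty] at h
        have h0 : cl Q = 0 := by
          have h1 : sSup {j : ℕ | 2^j * lam ≤ dAvg w (Q:Set (Rn n))} = 0 := by
            rw [h]; exact csSup_empty
          exact h1
        omega
      exact Nat.sSup_mem hne (hbdd Q)
    -- decomposition
    set f : {Q : Set (Rn n) // Q ∈ S ∧ Q ⊆ R} → ℝ≥0∞ := fun Q => (dAvg w (Q:Set (Rn n))) ^ γ * volume (Q : Set (Rn n)) with hf
    have hdecomp : (∑' Q : {Q : Set (Rn n) // Q ∈ S ∧ Q ⊆ R}, f Q) = ∑' k : ℕ, ∑' b : {b : {Q : Set (Rn n) // Q ∈ S ∧ Q ⊆ R} // cl b = k}, f b.1 := by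
      rw [← (Equiv.sigmaFiberEquiv cl).tsum_eq f, ENNReal.tsum_sigma']
      rfl
    -- per-class volume bound
    have hvolcl : ∀ k : ℕ, ∑' b : {b : {Q : Set (Rn n) // Q ∈ S ∧ Q ⊆ R} // cl b = k}, volume (b.1.1)
        ≤ 2 * (((2:ℝ≥0∞)^k)⁻¹ * volume R) := by
      intro k
      rcases Nat.eq_zero_or_pos k with hk | hk
      · subst hk
        simp only [pow_zero, inv_one, one_mul]
        exact sparse_tsum E hE hEdisj
          (fun b : {b : {Q : Set (Rn n) // Q ∈ S ∧ Q ⊆ R} // cl b = 0} => b.1.1)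
          (fun b => b.1.2.1)
          (fun a b hab => Subtype.ext (Subtype.ext hab))
          (fun b => ((hE _ b.1.2.1).1).trans b.1.2.2)
      · set t : ℝ≥0∞ := 2^k * lam with ht
        have ht0 : t ≠ 0 := mul_ne_zero (pow_ne_zero k (by norm_num)) hlam0
        have httop : t ≠ ⊤ := ENNReal.mul_ne_top (ENNReal.pow_ne_top ENNReal.ofNat_ne_top) hlamt
        set B := ⋃₀ {Q | IsDyadicCube n Q ∧ Q ⊆ R ∧ t ≤ dAvg w Q} with hB
        have hstep : ∑' b : {b : {Q : Set (Rn n) // Q ∈ S ∧ Q ⊆ R} // cl b = k}, volume (b.1.1) ≤ 2 * volume B := by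
          apply sparse_tsum E hE hEdisj
            (fun b : {b : {Q : Set (Rn n) // Q ∈ S ∧ Q ⊆ R} // cl b = k} => b.1.1)
            (fun b => b.1.2.1)
            (fun a b hab => Subtype.ext (Subtype.ext hab))
          intro b
          refine ((hE _ b.1.2.1).1).trans ?_
          apply subset_sUnion_of_mem
          refine ⟨hSd _ b.1.2.1, b.1.2.2, ?_⟩
          rw [ht]
          have := hF2 b.1 (by rw [b.2]; exact hk)
          rwa [b.2] at this
        refine hstep.trans ?_
        apply mul_le_mul_right
        calc volume B ≤ t⁻¹ * ∫⁻ x in R, w x := union_bound w hR ht0 httop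
          _ = t⁻¹ * (lam * volume R) := by rw [hIR]
          _ = ((2:ℝ≥0∞)^k)⁻¹ * volume R := by
              rw [ht, ENNReal.mul_inv (Or.inr hlamt) (Or.inr hlam0)]
              rw [mul_assoc, ← mul_assoc lam⁻¹ lam, ENNReal.inv_mul_cancel hlam0 hlamt, one_mul]
    -- per-class bound
    have hclass : ∀ k : ℕ, ∑' b : {b : {Q : Set (Rn n) // Q ∈ S ∧ Q ⊆ R} // cl b = k}, f b.1
        ≤ (2:ℝ≥0∞)^((1:ℝ)+γ) * c^k * (lam^γ * volume R) := by
      intro k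
      have h1 : ∀ b : {b : {Q : Set (Rn n) // Q ∈ S ∧ Q ⊆ R} // cl b = k}, f b.1 ≤ (2^(k+1) * lam)^γ * volume (b.1.1) := by
        intro b
        apply mul_le_mul_left
        apply ENNReal.rpow_le_rpow _ hγ0
        have := (hF1 b.1).le
        rwa [b.2] at this
      calc ∑' b : {b : {Q : Set (Rn n) // Q ∈ S ∧ Q ⊆ R} // cl b = k}, f b.1
          ≤ ∑' b : {b : {Q : Set (Rn n) // Q ∈ S ∧ Q ⊆ R} // cl b = k}, (2^(k+1) * lam)^γ * volume (b.1.1) :=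
            ENNReal.tsum_le_tsum h1
        _ = (2^(k+1) * lam)^γ * ∑' b : {b : {Q : Set (Rn n) // Q ∈ S ∧ Q ⊆ R} // cl b = k}, volume (b.1.1) :=
            ENNReal.tsum_mul_left
        _ ≤ (2^(k+1) * lam)^γ * (2 * (((2:ℝ≥0∞)^k)⁻¹ * volume R)) :=
            mul_le_mul_right (hvolcl k) _
        _ = (2:ℝ≥0∞)^((1:ℝ)+γ) * c^k * (lam^γ * volume R) := by
            have e1 : ((2:ℝ≥0∞)^(k+1))^γ = (2:ℝ≥0∞)^((((k:ℝ))+1)*γ) := by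
              rw [← ENNReal.rpow_natCast (2:ℝ≥0∞) (k+1), ← ENNReal.rpow_mul]
              push_cast
              ring_nf
            have e2 : ((2:ℝ≥0∞)^k)⁻¹ = (2:ℝ≥0∞)^(-(k:ℝ)) := by
              rw [ENNReal.rpow_neg, ENNReal.rpow_natCast]
            have e4 : c^k = (2:ℝ≥0∞)^((γ-1)*(k:ℝ)) := by
              rw [hc, ← ENNReal.rpow_natCast ((2:ℝ≥0∞)^(γ-1)) k, ← ENNReal.rpow_mul]
            have hpow : ∀ a b : ℝ, (2:ℝ≥0∞)^a * (2:ℝ≥0∞)^b = 2^(a+b) :=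
              fun a b => (ENNReal.rpow_add a b (by norm_num) ENNReal.ofNat_ne_top).symm
            rw [ENNReal.mul_rpow_of_nonneg _ _ hγ0, e1, e2, e4]
            rw [show (2:ℝ≥0∞) * ((2:ℝ≥0∞)^(-(k:ℝ)) * volume R)
                = (2:ℝ≥0∞)^((1:ℝ) + -(k:ℝ)) * volume R by rw [← hpow, ENNReal.rpow_one]; ring]
            rw [show (2:ℝ≥0∞)^((1:ℝ)+γ) * (2:ℝ≥0∞)^((γ-1)*(k:ℝ)) * (lam^γ * volume R)
                = ((2:ℝ≥0∞)^((1:ℝ)+γ+(γ-1)*(k:ℝ))) * (lam^γ * volume R) by rw [hpow]]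
            rw [show ((2:ℝ≥0∞)^((((k:ℝ))+1)*γ) * lam^γ) * ((2:ℝ≥0∞)^((1:ℝ) + -(k:ℝ)) * volume R)
                = ((2:ℝ≥0∞)^((((k:ℝ))+1)*γ) * (2:ℝ≥0∞)^((1:ℝ) + -(k:ℝ))) * (lam^γ * volume R) by ring]
            rw [hpow]
            congr 2
            ring
    -- sum up
    calc (∑' Q : {Q : Set (Rn n) // Q ∈ S ∧ Q ⊆ R}, f Q)
        = ∑' k : ℕ, ∑' b : {b : {Q : Set (Rn n) // Q ∈ S ∧ Q ⊆ R} // cl b = k}, f b.1 := hdecomp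
      _ ≤ ∑' k : ℕ, (2:ℝ≥0∞)^((1:ℝ)+γ) * c^k * (lam^γ * volume R) :=
          ENNReal.tsum_le_tsum hclass
      _ = ∑' k : ℕ, (2:ℝ≥0∞)^((1:ℝ)+γ) * (c^k * (lam^γ * volume R)) := by
          congr 1; funext k; ring
      _ = (2:ℝ≥0∞)^((1:ℝ)+γ) * ∑' k : ℕ, (c^k * (lam^γ * volume R)) := ENNReal.tsum_mul_left
      _ = (2:ℝ≥0∞)^((1:ℝ)+γ) * ((∑' k : ℕ, c^k) * (lam^γ * volume R)) := by
          rw [ENNReal.tsum_mul_right]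
      _ = C * (lam^γ * volume R) := by
          rw [ENNReal.tsum_geometric, hC]; ring
      _ = C * lam^γ * volume R := by ring

end Paper
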